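/- The group obtained from the presentation of G(D̃₄^{(1,1)}) by adding the quadratic relations t₀² = t₁² = 1 and sⱼ² = 1 for j ∈ {1,2,3,4} is isomorphic to the group obtained from the presentation of G'(D̃₄^{(1,1)}) by adding the quadratic relations tᵢ² = 1 for all i ∈ ℤ and sⱼ² = 1 for j ∈ {1,2,3,4} (both present the hyperbolic elliptic Weyl group Hyp(D̃₄^{(1,1)})). -/

import Mathlib

/-!
STATEMENT 1: Adding the quadratic relations to the two presentations of `D̃₄^{(1,1)}`
gives isomorphic groups (both presenting `Hyp(D̃₄^{(1,1)})`).
-/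

namespace EllipticD4Hyp

abbrev GenG : Type := Fin 2 ⊕ Fin 4
abbrev GenG' : Type := ℤ ⊕ Fin 4

def tG (i : Fin 2) : FreeGroup GenG := FreeGroup.of (Sum.inl i)
def sG (j : Fin 4) : FreeGroup GenG := FreeGroup.of (Sum.inr j)

/-- Relators of the elliptic Dynkin presentation of `G(D̃₄^{(1,1)})`. -/
def relsG : Set (FreeGroup GenG) :=
  { r | (∃ i j, r = (tG i * sG j * tG i)⁻¹ * (sG j * tG i * sG j)) ∨
        (∃ i j, i ≠ j ∧ r = (sG i * sG j)⁻¹ * (sG j * sG i)) ∨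
        (∃ i, r = (sG i * tG 1 * tG 0 * sG i * tG 1 * tG 0)⁻¹ *
                  (tG 1 * tG 0 * sG i * tG 1 * tG 0 * sG i)) }

/-- Relators of the elliptic Dynkin presentation together with the quadratic relators
`t₀² = t₁² = 1` and `sⱼ² = 1` for `j ∈ {1,2,3,4}` (i.e. `g² = 1` for every generator). -/
def relsHypG : Set (FreeGroup GenG) :=
  relsG ∪ { r | ∃ x : GenG, r = (FreeGroup.of x) ^ 2 }

def tG' (i : ℤ) : FreeGroup GenG' := FreeGroup.of (Sum.inl i)
def sG' (j : Fin 4) : FreeGroup GenG' := FreeGroup.of (Sum.inr j)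

/-- Relators of the new presentation of `G'(D̃₄^{(1,1)})`. -/
def relsG' : Set (FreeGroup GenG') :=
  { r | (∃ i j, r = (tG' i * sG' j * tG' i)⁻¹ * (sG' j * tG' i * sG' j)) ∨
        (∃ i j, i ≠ j ∧ r = (sG' i * sG' j)⁻¹ * (sG' j * sG' i)) ∨
        (∃ i j : ℤ, r = (tG' i * tG' (i - 1))⁻¹ * (tG' j * tG' (j - 1))) }

/-- Relators of the new presentation together with the quadratic relators
`tᵢ² = 1` for all `i ∈ ℤ` and `sⱼ² = 1` for `j ∈ {1,2,3,4}`. -/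
def relsHypG' : Set (FreeGroup GenG') :=
  relsG' ∪ { r | ∃ x : GenG', r = (FreeGroup.of x) ^ 2 }

section Core
variable {G : Type*} [Group G]

lemma key_iff {a b s : G} (ha : a*a = 1) (hb : b*b = 1) (hs : s*s = 1)
    (hba : a*s*a = s*a*s) (hbb : b*s*b = s*b*s) :
    (b*a*b*s*(b*a*b) = s*(b*a*b)*s) ↔ (s*(a*b)*s*(a*b) = a*b*s*(a*b)*s) := by
  have hs' : ∀ x : G, s*(s*x) = x := fun x => by rw [← mul_assoc, hs, one_mul]
  have ha' : ∀ x : G, a*(a*x) = x := fun x => by rw [← mul_assoc, ha, one_mul]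
  have hbb' : ∀ x : G, b*(s*(b*x)) = s*(b*(s*x)) := fun x => by
    rw [← mul_assoc, ← mul_assoc, hbb, mul_assoc, mul_assoc]
  have hba' : ∀ x : G, s*(a*(s*x)) = a*(s*(a*x)) := fun x => by
    rw [← mul_assoc, ← mul_assoc, ← hba, mul_assoc, mul_assoc]
  have E1 : b*a*b*s*(b*a*b) = b*(s*(a*(s*(a*(b*(s*(a*b))))))) := by
    rw [show b*a*b*s*(b*a*b) = b*(a*(b*(s*(b*(a*b))))) by simp only [mul_assoc]]
    rw [← hs' (a*(b*(s*(b*(a*b)))))]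
    rw [hbb' (a*b)]
    rw [hba' (b*(s*(a*b)))]
  have E2 : b*(s*(a*(a*(b*(s*(a*(b*s))))))) = s*(b*a*b)*s := by
    rw [ha' (b*(s*(a*(b*s))))]
    rw [hbb' (s*(a*(b*s)))]
    rw [hs' (a*(b*s))]
    simp only [mul_assoc]
  constructor
  · intro h
    have h2 : b*(s*(a*(s*(a*(b*(s*(a*b))))))) = b*(s*(a*(a*(b*(s*(a*(b*s))))))) := by
      rw [← E1, h, ← E2]
    have h3 := mul_left_cancel (mul_left_cancel (mul_left_cancel h2))
    simp only [mul_assoc]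
    exact h3
  · intro h
    have h3 : s*(a*(b*(s*(a*b)))) = a*(b*(s*(a*(b*s)))) := by
      simpa only [mul_assoc] using h
    rw [E1, ← E2, h3]

lemma braid_of_braids {a b s d : G} (hd : a * b = d)
    (ha : a*a = 1) (hb : b*b = 1) (hs : s*s = 1)
    (hba : a*s*a = s*a*s) (hbb : b*s*b = s*b*s)
    (hc : s*d*s*d = d*s*d*s) :
    b*a*b*s*(b*a*b) = s*(b*a*b)*s := by
  subst hd
  exact (key_iff ha hb hs hba hbb).mpr hc

lemma comm_of_braids {a b s d : G} (hd : a * b = d)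
    (ha : a*a = 1) (hb : b*b = 1) (hs : s*s = 1)
    (hba : a*s*a = s*a*s) (hbb : b*s*b = s*b*s)
    (hbab : b*a*b*s*(b*a*b) = s*(b*a*b)*s) :
    s*d*s*d = d*s*d*s := by
  subst hd
  exact (key_iff ha hb hs hba hbb).mp hbab

end Core

-- generic extraction lemmas
lemma mk_eq_one {α : Type*} {rels : Set (FreeGroup α)} {r : FreeGroup α} (h : r ∈ rels) :
    PresentedGroup.mk rels r = 1 :=
  (QuotientGroup.eq_one_iff r).mpr (Subgroup.subset_normalClosure h)

lemma mk_of {α : Type*} {rels : Set (FreeGroup α)} (x : α) :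
    PresentedGroup.mk rels (FreeGroup.of x) = PresentedGroup.of x := rfl

lemma rel_eq {α : Type*} {rels : Set (FreeGroup α)} {u v : FreeGroup α} (h : u⁻¹ * v ∈ rels) :
    PresentedGroup.mk rels u = PresentedGroup.mk rels v := by
  have h1 := mk_eq_one h
  rwa [map_mul, map_inv, inv_mul_eq_one] at h1

lemma sq_of {α : Type*} {rels : Set (FreeGroup α)} {x : α} (h : (FreeGroup.of x)^2 ∈ rels) :
    (PresentedGroup.of x : PresentedGroup rels) * PresentedGroup.of x = 1 := by
  have h1 := mk_eq_one h
  rwa [map_pow, pow_two, mk_of] at h1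

-- G side elements
def a0 : PresentedGroup relsHypG := PresentedGroup.of (Sum.inl 0)
def a1 : PresentedGroup relsHypG := PresentedGroup.of (Sum.inl 1)
def y (j : Fin 4) : PresentedGroup relsHypG := PresentedGroup.of (Sum.inr j)

lemma sqP (x : GenG) : (PresentedGroup.of x : PresentedGroup relsHypG) * PresentedGroup.of x = 1 :=
  sq_of (Set.mem_union_right _ ⟨x, rfl⟩)

lemma sq_a0 : a0 * a0 = 1 := sqP (Sum.inl 0)
lemma sq_a1 : a1 * a1 = 1 := sqP (Sum.inl 1)
lemma sq_y (j : Fin 4) : y j * y j = 1 := sqP (Sum.inr j)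

lemma braid_a (i : Fin 2) (j : Fin 4) :
    (PresentedGroup.of (Sum.inl i) : PresentedGroup relsHypG) * y j * PresentedGroup.of (Sum.inl i)
      = y j * PresentedGroup.of (Sum.inl i) * y j := by
  have h := rel_eq (rels := relsHypG)
    (u := tG i * sG j * tG i) (v := sG j * tG i * sG j)
    (Set.mem_union_left _ (Or.inl ⟨i, j, rfl⟩))
  simpa only [map_mul, tG, sG, mk_of, y] using h

lemma braid_a0 (j : Fin 4) : a0 * y j * a0 = y j * a0 * y j := braid_a 0 j
lemma braid_a1 (j : Fin 4) : a1 * y j * a1 = y j * a1 * y j := braid_a 1 j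

lemma comm_y {j k : Fin 4} (h : j ≠ k) : y j * y k = y k * y j := by
  have h2 := rel_eq (rels := relsHypG)
    (u := sG j * sG k) (v := sG k * sG j)
    (Set.mem_union_left _ (Or.inr (Or.inl ⟨j, k, h, rfl⟩)))
  simpa only [map_mul, sG, mk_of, y] using h2

def cP : PresentedGroup relsHypG := a1 * a0

lemma comm_c (j : Fin 4) : y j * cP * y j * cP = cP * y j * cP * y j := by
  have h := rel_eq (rels := relsHypG)
    (u := sG j * tG 1 * tG 0 * sG j * tG 1 * tG 0)
    (v := tG 1 * tG 0 * sG j * tG 1 * tG 0 * sG j)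
    (Set.mem_union_left _ (Or.inr (Or.inr ⟨j, rfl⟩)))
  simp only [map_mul, tG, sG, mk_of] at h
  simp only [cP, a0, a1, y, mul_assoc] at *
  exact h

lemma a0_inv : a0⁻¹ = a0 := inv_eq_of_mul_eq_one_right sq_a0
lemma a1_inv : a1⁻¹ = a1 := inv_eq_of_mul_eq_one_right sq_a1
lemma y_inv (j : Fin 4) : (y j)⁻¹ = y j := inv_eq_of_mul_eq_one_right (sq_y j)

lemma comm_cinv (j : Fin 4) : y j * cP⁻¹ * y j * cP⁻¹ = cP⁻¹ * y j * cP⁻¹ * y j := by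
  have h2 := congrArg (·⁻¹) (comm_c j)
  simp only [mul_inv_rev, y_inv] at h2
  simp only [mul_assoc] at h2 ⊢
  exact h2.symm

def TP (i : ℤ) : PresentedGroup relsHypG := cP ^ i * a0

lemma T_zero : TP 0 = a0 := by simp [TP]
lemma T_one : TP 1 = a1 := by
  rw [TP, zpow_one, cP, mul_assoc, sq_a0, mul_one]

lemma conj0 : a0 * cP * a0 = cP⁻¹ := by
  rw [cP, mul_inv_rev, a0_inv, a1_inv]
  calc a0 * (a1 * a0) * a0 = a0 * a1 * (a0 * a0) := by simp only [mul_assoc]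
  _ = a0 * a1 := by rw [sq_a0, mul_one]

lemma conj0z (i : ℤ) : a0 * cP ^ i * a0 = cP ^ (-i) := by
  calc a0 * cP ^ i * a0 = a0 * cP ^ i * a0⁻¹ := by rw [a0_inv]
  _ = (a0 * cP * a0⁻¹) ^ i := by rw [conj_zpow]
  _ = (a0 * cP * a0) ^ i := by rw [a0_inv]
  _ = (cP⁻¹) ^ i := by rw [conj0]
  _ = cP ^ (-i) := by rw [inv_zpow, zpow_neg]

lemma sq_T (i : ℤ) : TP i * TP i = 1 := by
  calc TP i * TP i = cP ^ i * (a0 * cP ^ i * a0) := by simp only [TP, mul_assoc]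
  _ = cP ^ i * cP ^ (-i) := by rw [conj0z]
  _ = 1 := by rw [← zpow_add, add_neg_cancel, zpow_zero]

lemma T_succ_mul (i : ℤ) : TP (i+1) * TP i = cP := by
  calc TP (i+1) * TP i = cP ^ (i+1) * (a0 * cP ^ i * a0) := by simp only [TP, mul_assoc]
  _ = cP ^ (i+1) * cP ^ (-i) := by rw [conj0z]
  _ = cP := by rw [← zpow_add, show i+1+-i = 1 by ring, zpow_one]

lemma T_mul_pred (i : ℤ) : TP i * TP (i-1) = cP := by
  have h := T_succ_mul (i-1)
  rwa [show i-1+1 = i by ring] at h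

lemma T_mul_succ (i : ℤ) : TP i * TP (i+1) = cP⁻¹ := by
  calc TP i * TP (i+1) = cP ^ i * (a0 * cP ^ (i+1) * a0) := by simp only [TP, mul_assoc]
  _ = cP ^ i * cP ^ (-(i+1)) := by rw [conj0z]
  _ = cP⁻¹ := by rw [← zpow_add, show i+-(i+1) = -1 by ring, zpow_neg_one]

lemma T_eq_bab (i : ℤ) : TP (i+1) * TP i * TP (i+1) = TP (i+2) := by
  rw [T_succ_mul i]
  simp only [TP]
  rw [← mul_assoc]
  congr 1
  conv_rhs => rw [show (i+2 : ℤ) = 1 + (i+1) by ring, zpow_add, zpow_one]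

lemma T_eq_aba (i : ℤ) : TP i * TP (i+1) * TP i = TP (i-1) := by
  rw [T_mul_succ i]
  simp only [TP]
  rw [← mul_assoc]
  congr 1
  conv_rhs => rw [show (i-1 : ℤ) = -1 + i by ring, zpow_add, zpow_neg_one]

lemma braidT (i : ℤ) (j : Fin 4) : TP i * y j * TP i = y j * TP i * y j := by
  have key : ∀ i : ℤ, (∀ j, TP i * y j * TP i = y j * TP i * y j) ∧
      (∀ j, TP (i+1) * y j * TP (i+1) = y j * TP (i+1) * y j) := by
    have up : ∀ i : ℤ, ((∀ j, TP i * y j * TP i = y j * TP i * y j) ∧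
        (∀ j, TP (i+1) * y j * TP (i+1) = y j * TP (i+1) * y j)) →
        ((∀ j, TP (i+1) * y j * TP (i+1) = y j * TP (i+1) * y j) ∧
        (∀ j, TP (i+2) * y j * TP (i+2) = y j * TP (i+2) * y j)) := by
      intro i ih
      refine ⟨ih.2, fun j => ?_⟩
      have h := braid_of_braids (T_mul_succ i) (sq_T i) (sq_T (i+1)) (sq_y j)
        (ih.1 j) (ih.2 j) (comm_cinv j)
      rwa [T_eq_bab i] at h
    have down : ∀ i : ℤ, ((∀ j, TP i * y j * TP i = y j * TP i * y j) ∧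
        (∀ j, TP (i+1) * y j * TP (i+1) = y j * TP (i+1) * y j)) →
        ((∀ j, TP (i-1) * y j * TP (i-1) = y j * TP (i-1) * y j) ∧
        (∀ j, TP i * y j * TP i = y j * TP i * y j)) := by
      intro i ih
      refine ⟨fun j => ?_, ih.1⟩
      have h := braid_of_braids (T_succ_mul i) (sq_T (i+1)) (sq_T i) (sq_y j)
        (ih.2 j) (ih.1 j) (comm_c j)
      rwa [T_eq_aba i] at h
    intro i
    induction i using Int.induction_on with
    | zero =>
      constructor
      · intro j; rw [T_zero]; exact braid_a0 j
      · intro j; rw [zero_add, T_one]; exact braid_a1 j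
    | succ i ih =>
      have h := up i ih
      exact ⟨h.1, by simpa only [show (i:ℤ)+1+1 = (i:ℤ)+2 by ring] using h.2⟩
    | pred i ih =>
      have h := down (-i) ih
      exact ⟨h.1, by simpa only [show -(i:ℤ)-1+1 = -(i:ℤ) by ring] using h.2⟩
  exact (key i).1 j

-- G' side

def U (i : ℤ) : PresentedGroup relsHypG' := PresentedGroup.of (Sum.inl i)
def z (j : Fin 4) : PresentedGroup relsHypG' := PresentedGroup.of (Sum.inr j)

lemma sqP' (x : GenG') : (PresentedGroup.of x : PresentedGroup relsHypG') * PresentedGroup.of x = 1 :=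
  sq_of (Set.mem_union_right _ ⟨x, rfl⟩)

lemma sq_U (i : ℤ) : U i * U i = 1 := sqP' (Sum.inl i)
lemma sq_z (j : Fin 4) : z j * z j = 1 := sqP' (Sum.inr j)

lemma braid_U (i : ℤ) (j : Fin 4) : U i * z j * U i = z j * U i * z j := by
  have h := rel_eq (rels := relsHypG')
    (u := tG' i * sG' j * tG' i) (v := sG' j * tG' i * sG' j)
    (Set.mem_union_left _ (Or.inl ⟨i, j, rfl⟩))
  simpa only [map_mul, tG', sG', mk_of, U, z] using h

lemma comm_z {j k : Fin 4} (h : j ≠ k) : z j * z k = z k * z j := by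
  have h2 := rel_eq (rels := relsHypG')
    (u := sG' j * sG' k) (v := sG' k * sG' j)
    (Set.mem_union_left _ (Or.inr (Or.inl ⟨j, k, h, rfl⟩)))
  simpa only [map_mul, sG', mk_of, z] using h2

lemma R3U (i j : ℤ) : U i * U (i-1) = U j * U (j-1) := by
  have h := rel_eq (rels := relsHypG')
    (u := tG' i * tG' (i-1)) (v := tG' j * tG' (j-1))
    (Set.mem_union_left _ (Or.inr (Or.inr ⟨i, j, rfl⟩)))
  simpa only [map_mul, tG', mk_of, U] using h

lemma Usucc (i : ℤ) : U (i+1) = (U 1 * U 0) * U i := by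
  have h2 := R3U (i+1) 1
  rw [show i+1-1 = i by ring, show (1:ℤ)-1 = 0 by ring] at h2
  calc U (i+1) = U (i+1) * (U i * U i) := by rw [sq_U, mul_one]
  _ = (U (i+1) * U i) * U i := by rw [mul_assoc]
  _ = (U 1 * U 0) * U i := by rw [h2]

lemma U_inv (i : ℤ) : (U i)⁻¹ = U i := inv_eq_of_mul_eq_one_right (sq_U i)
lemma z_inv (j : Fin 4) : (z j)⁻¹ = z j := inv_eq_of_mul_eq_one_right (sq_z j)

lemma Um1 : U 0 * U 1 * U 0 = U (-1) := by
  have h := Usucc (-1)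
  rw [show (-1:ℤ)+1 = 0 by ring] at h
  calc U 0 * U 1 * U 0 = (U 1 * U 0)⁻¹ * U 0 := by rw [mul_inv_rev, U_inv, U_inv]
  _ = (U 1 * U 0)⁻¹ * ((U 1 * U 0) * U (-1)) := by rw [← h]
  _ = U (-1) := by rw [← mul_assoc, inv_mul_cancel, one_mul]

lemma commP' (j : Fin 4) :
    z j * (U 1 * U 0) * z j * (U 1 * U 0) = (U 1 * U 0) * z j * (U 1 * U 0) * z j := by
  refine comm_of_braids rfl (sq_U 1) (sq_U 0) (sq_z j) (braid_U 1 j) (braid_U 0 j) ?_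
  rw [Um1]
  exact braid_U (-1) j

lemma Ueq (i : ℤ) : (U 1 * U 0) ^ i * U 0 = U i := by
  induction i using Int.induction_on with
  | zero => rw [zpow_zero, one_mul]
  | succ i ih =>
    have e : (U 1 * U 0) ^ ((i:ℤ)+1) = (U 1 * U 0) * (U 1 * U 0) ^ (i:ℤ) := by
      rw [show ((i:ℤ)+1) = 1+(i:ℤ) by ring, zpow_add, zpow_one]
    rw [e, mul_assoc, ih, ← Usucc]
  | pred i ih =>
    have e : (U 1 * U 0) ^ (-(i:ℤ)-1) = (U 1 * U 0)⁻¹ * (U 1 * U 0) ^ (-(i:ℤ)) := by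
      rw [show (-(i:ℤ)-1) = -1+(-(i:ℤ)) by ring, zpow_add, zpow_neg_one]
    rw [e, mul_assoc, ih]
    have h := Usucc (-(i:ℤ)-1)
    rw [show -(i:ℤ)-1+1 = -(i:ℤ) by ring] at h
    rw [h, ← mul_assoc, inv_mul_cancel, one_mul]

def fmap : GenG → PresentedGroup relsHypG' := Sum.elim (fun i => U (i.val : ℤ)) z
def gmap : GenG' → PresentedGroup relsHypG := Sum.elim TP y

lemma fmap_rel : ∀ r ∈ relsHypG, FreeGroup.lift fmap r = 1 := by
  rintro r (hr | ⟨x, rfl⟩)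
  · rcases hr with ⟨i, j, rfl⟩ | ⟨j, k, hjk, rfl⟩ | ⟨j, rfl⟩
    · simp only [map_mul, map_inv, tG, sG, FreeGroup.lift_apply_of, fmap, Sum.elim_inl, Sum.elim_inr]
      rw [inv_mul_eq_one]
      exact braid_U (i.val) j
    · simp only [map_mul, map_inv, sG, FreeGroup.lift_apply_of, fmap, Sum.elim_inr]
      rw [inv_mul_eq_one]
      exact comm_z hjk
    · simp only [map_mul, map_inv, tG, sG, FreeGroup.lift_apply_of, fmap, Sum.elim_inl, Sum.elim_inr,
        Fin.val_one, Fin.val_zero, Nat.cast_one, Nat.cast_zero]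
      rw [inv_mul_eq_one]
      have h := commP' j
      simp only [mul_assoc] at h ⊢
      exact h
  · rw [map_pow, pow_two]
    cases x with
    | inl i =>
      simp only [FreeGroup.lift_apply_of, fmap, Sum.elim_inl]
      exact sq_U _
    | inr j =>
      simp only [FreeGroup.lift_apply_of, fmap, Sum.elim_inr]
      exact sq_z j

lemma gmap_rel : ∀ r ∈ relsHypG', FreeGroup.lift gmap r = 1 := by
  rintro r (hr | ⟨x, rfl⟩)
  · rcases hr with ⟨i, j, rfl⟩ | ⟨j, k, hjk, rfl⟩ | ⟨i, j, rfl⟩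
    · simp only [map_mul, map_inv, tG', sG', FreeGroup.lift_apply_of, gmap, Sum.elim_inl, Sum.elim_inr]
      rw [inv_mul_eq_one]
      exact braidT i j
    · simp only [map_mul, map_inv, sG', FreeGroup.lift_apply_of, gmap, Sum.elim_inr]
      rw [inv_mul_eq_one]
      exact comm_y hjk
    · simp only [map_mul, map_inv, tG', FreeGroup.lift_apply_of, gmap, Sum.elim_inl]
      rw [inv_mul_eq_one, T_mul_pred, T_mul_pred]
  · rw [map_pow, pow_two]
    cases x with
    | inl i =>
      simp only [FreeGroup.lift_apply_of, gmap, Sum.elim_inl]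
      exact sq_T i
    | inr j =>
      simp only [FreeGroup.lift_apply_of, gmap, Sum.elim_inr]
      exact sq_y j

def φ : PresentedGroup relsHypG →* PresentedGroup relsHypG' := PresentedGroup.toGroup fmap_rel
def ψ : PresentedGroup relsHypG' →* PresentedGroup relsHypG := PresentedGroup.toGroup gmap_rel

lemma comp1 : ψ.comp φ = MonoidHom.id (PresentedGroup relsHypG) := by
  apply PresentedGroup.ext
  rintro (i | j)
  · fin_cases i
    · show ψ (φ (PresentedGroup.of (Sum.inl 0))) = PresentedGroup.of (Sum.inl 0)
      rw [show (PresentedGroup.of (Sum.inl 0) : PresentedGroup relsHypG) = a0 from rfl]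
      simp only [φ, ψ, PresentedGroup.toGroup.of, a0, fmap, Sum.elim_inl, Fin.val_zero,
        Nat.cast_zero]
      rw [show (U 0 : PresentedGroup relsHypG') = PresentedGroup.of (Sum.inl 0) from rfl]
      simp only [PresentedGroup.toGroup.of, gmap, Sum.elim_inl]
      rw [T_zero, a0]
    · show ψ (φ (PresentedGroup.of (Sum.inl 1))) = PresentedGroup.of (Sum.inl 1)
      rw [show (PresentedGroup.of (Sum.inl 1) : PresentedGroup relsHypG) = a1 from rfl]
      simp only [φ, ψ, PresentedGroup.toGroup.of, a1, fmap, Sum.elim_inl, Fin.val_one,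
        Nat.cast_one]
      rw [show (U 1 : PresentedGroup relsHypG') = PresentedGroup.of (Sum.inl 1) from rfl]
      simp only [PresentedGroup.toGroup.of, gmap, Sum.elim_inl]
      rw [T_one, a1]
  · show ψ (φ (PresentedGroup.of (Sum.inr j))) = PresentedGroup.of (Sum.inr j)
    simp only [φ, ψ, PresentedGroup.toGroup.of, fmap, Sum.elim_inr]
    rw [show (z j : PresentedGroup relsHypG') = PresentedGroup.of (Sum.inr j) from rfl]
    simp only [PresentedGroup.toGroup.of, gmap, Sum.elim_inr]
    rw [y]

lemma comp2 : φ.comp ψ = MonoidHom.id (PresentedGroup relsHypG') := by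
  apply PresentedGroup.ext
  rintro (i | j)
  · show φ (ψ (PresentedGroup.of (Sum.inl i))) = PresentedGroup.of (Sum.inl i)
    have h1 : ψ (PresentedGroup.of (Sum.inl i)) = TP i := by
      simp only [ψ, PresentedGroup.toGroup.of, gmap, Sum.elim_inl]
    have h2 : φ a0 = U 0 := by
      simp only [φ, a0, PresentedGroup.toGroup.of, fmap, Sum.elim_inl, Fin.val_zero, Nat.cast_zero]
    have h3 : φ a1 = U 1 := by
      simp only [φ, a1, PresentedGroup.toGroup.of, fmap, Sum.elim_inl, Fin.val_one, Nat.cast_one]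
    rw [h1, TP, map_mul, map_zpow, cP, map_mul, h2, h3]
    exact Ueq i
  · show φ (ψ (PresentedGroup.of (Sum.inr j))) = PresentedGroup.of (Sum.inr j)
    have h1 : ψ (PresentedGroup.of (Sum.inr j)) = y j := by
      simp only [ψ, PresentedGroup.toGroup.of, gmap, Sum.elim_inr]
    have h2 : φ (y j) = z j := by
      simp only [φ, y, PresentedGroup.toGroup.of, fmap, Sum.elim_inr]
    rw [h1, h2, z]

theorem Hyp_iso : Nonempty (PresentedGroup relsHypG ≃* PresentedGroup relsHypG') :=
  ⟨MonoidHom.toMulEquiv φ ψ comp1 comp2⟩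

end EllipticD4Hyp
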